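/- If 𝕎 is a bounded operator on H²(E) ⊕ L, written in block form [[A, B],[C, D]] with respect to this decomposition, that satisfies 𝕎 (M_z ⊕ W) = q (M_z ⊕ W) 𝕎 for a unitary W on L and unimodular q, then B = 0 (the block mapping L into H²(E) vanishes). -/

import Mathlib

set_option synthInstance.maxHeartbeats 1000000
set_option maxHeartbeats 2000000

open ContinuousLinearMap

/-- If `𝕎` is a bounded operator on `H²(E) ⊕ L` (with `H²(E)` realized as `ℓ²(ℕ, E)` of
Taylor coefficients and `⊕` the `ℓ²`-direct sum), written in `2 × 2` block form with
respect to this decomposition, satisfying `𝕎 (M_z ⊕ W) = q (M_z ⊕ W) 𝕎` for a unitary `W`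
on `L` and a unimodular `q`, then its `(1,2)` block (mapping `L` into `H²(E)`) vanishes. -/
theorem block_vanishes_of_qintertwining
    {E : Type*} [NormedAddCommGroup E] [InnerProductSpace ℂ E] [CompleteSpace E]
    {L : Type*} [NormedAddCommGroup L] [InnerProductSpace ℂ L] [CompleteSpace L]
    (q : ℂ) (hq : ‖q‖ = 1)
    (Mz : lp (fun _ : ℕ => E) 2 →L[ℂ] lp (fun _ : ℕ => E) 2)
    (hMz : ∀ f : lp (fun _ : ℕ => E) 2, (Mz f) 0 = 0 ∧ ∀ n : ℕ, (Mz f) (n + 1) = f n)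
    (W : L →L[ℂ] L)
    (hWuni : adjoint W ∘L W = 1 ∧ W ∘L adjoint W = 1)
    -- the direct-sum operator V = M_z ⊕ W
    (V : WithLp 2 (lp (fun _ : ℕ => E) 2 × L) →L[ℂ] WithLp 2 (lp (fun _ : ℕ => E) 2 × L))
    (hV : ∀ (f : lp (fun _ : ℕ => E) 2) (y : L),
      WithLp.equiv 2 _ (V ((WithLp.equiv 2 _).symm (f, y))) = (Mz f, W y))
    (𝕎 : WithLp 2 (lp (fun _ : ℕ => E) 2 × L) →L[ℂ] WithLp 2 (lp (fun _ : ℕ => E) 2 × L))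
    (h𝕎 : 𝕎 ∘L V = q • (V ∘L 𝕎)) :
    ∀ y : L, (WithLp.equiv 2 _ (𝕎 ((WithLp.equiv 2 _).symm (0, y)))).1 = 0 := by
  set e := WithLp.equiv 2 (lp (fun _ : ℕ => E) 2 × L) with he
  set B : L → lp (fun _ : ℕ => E) 2 := fun y => (e (𝕎 (e.symm (0, y)))).1 with hB
  -- key intertwining step
  have hstep : ∀ y : L, B (W y) = q • Mz (B y) := by
    intro y
    have h1 : V (e.symm (0, y)) = e.symm (0, W y) := by
      apply e.injective
      rw [hV 0 y, map_zero, Equiv.apply_symm_apply]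
    have h2 := congrArg (fun T => T (e.symm (0, y))) h𝕎
    simp only [comp_apply, smul_apply] at h2
    rw [h1] at h2
    have h3 : e (V (𝕎 (e.symm (0, y)))) =
        (Mz (e (𝕎 (e.symm (0, y)))).1, W (e (𝕎 (e.symm (0, y)))).2) := by
      have := hV (e (𝕎 (e.symm (0, y)))).1 (e (𝕎 (e.symm (0, y)))).2
      rwa [Prod.mk.eta, Equiv.symm_apply_apply] at this
    have h4 := congrArg (fun x => (e x).1) h2
    have hsm : (e (q • V (𝕎 (e.symm (0, y))))).1 = q • (e (V (𝕎 (e.symm (0, y))))).1 := rfl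
    rw [hsm, h3] at h4
    exact h4
  have hsurj : ∀ y : L, W (adjoint W y) = y := by
    intro y
    have := DFunLike.congr_fun hWuni.2 y
    simpa using this
  have hrec : ∀ y : L, B y = q • Mz (B (adjoint W y)) := by
    intro y
    conv_lhs => rw [← hsurj y]
    exact hstep _
  have hcoef : ∀ (k : ℕ) (y : L), (B y : ∀ _ : ℕ, E) k = 0 := by
    intro k
    induction k with
    | zero =>
      intro y
      rw [hrec y, lp.coeFn_smul, Pi.smul_apply, (hMz _).1, smul_zero]
    | succ k ih =>
      intro y
      rw [hrec y, lp.coeFn_smul, Pi.smul_apply, (hMz _).2 k, ih, smul_zero]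
  intro y
  exact lp.ext (funext fun k => hcoef k y)
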